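/- For every monotone map φ : [n] → [1], one has f_n ∘ f_φ = f_n as endomorphisms of C(m+1+n); equivalently, for every basis tuple (i₀ < … < i_p) of C(m+1+n), f_n( f_n(i₀,…,i_{k_φ}) · (i_{k_φ+1},…,i_p) ) = f_n(i₀,…,i_p). In particular (taking φ constant of value 0) f_n ∘ f_n = f_n. -/
import Mathlib


/-!
We represent the (augmented) normalized chain complex `C(N)` of the standard `N`-simplex by the
free abelian group on the finite subsets of `{0,…,N}`, a subset of cardinality `p+1` standing for
the strictly increasing `(p+1)`-tuple of its elements (a `p`-chain); the differential is the
alternating sum of the tuples obtained by deleting one entry (and vanishes on `0`-chains), and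
the augmentation sends every `0`-chain basis element to `1` (and vanishes in higher degrees).
-/

noncomputable section

abbrev Ch (α : Type) := Finset α →₀ ℤ

/-- index of `a` in `s`: the number of smaller elements of `s`. -/
def idx {α : Type} [LinearOrder α] (s : Finset α) (a : α) : ℕ :=
  (s.filter (fun b => b < a)).card

/-- value of the simplicial differential on a basis tuple:
`d(i₀,…,i_p) = Σₖ (−1)^k (i₀,…,î_k,…,i_p)` for `p ≥ 1`, and `0` on `0`-chains. -/
def dAux {α : Type} [LinearOrder α] (s : Finset α) : Ch α :=
  if 2 ≤ s.card then
    ∑ a ∈ s, ((-1 : ℤ) ^ (idx s a)) • Finsupp.single (s.erase a) (1 : ℤ)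
  else 0

/-- the differential of `C(N)`. -/
def chD (α : Type) [LinearOrder α] : Ch α →ₗ[ℤ] Ch α :=
  Finsupp.lift _ ℤ _ dAux

/-- the augmentation of `C(N)`: `e(i₀) = 1` on `0`-chains, `0` in higher degrees. -/
def chE (α : Type) : Ch α →ₗ[ℤ] ℤ :=
  Finsupp.lift _ ℤ _ (fun s => if s.card = 1 then (1 : ℤ) else 0)

/-- The chain map `c(ψ) : C(N') → C(N)` induced by a (monotone) map `ψ`,
`(i₀,…,i_p) ↦ (ψ(i₀),…,ψ(i_p))`, with the convention that a tuple with a repeated entry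
denotes `0`. -/
def chMap {α β : Type} [DecidableEq β] (ψ : α → β) : Ch α →ₗ[ℤ] Ch β :=
  Finsupp.lift _ ℤ _ (fun s =>
    if (s.image ψ).card = s.card then Finsupp.single (s.image ψ) (1 : ℤ) else 0)

/-- the element `m` of `{0,…,m+1+n}`. -/
def elM (m n : ℕ) : Fin (m+1+n+1) := ⟨m, by omega⟩

/-- `f_n` on a basis tuple `(i₀ < … < i_p)`, following the case analysis of the paper
(expressed via the sets of entries `< m` and `> m`):
`f_n = id` if `i_p ≤ m` or `m ≤ i₀`; `f_n(i₀,i₁) = (i₀,m) + (m,i₁)` if `p = 1` and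
`i₀ < m < i₁`; `f_n(i₀,…,i_p) = (m,i₁,…,i_p)` if `p > 1` and `i₀ < m < i₁`;
`f_n(i₀,…,i_p) = (i₀,…,i_{p−1},m)` if `p > 1` and `i_{p−1} < m < i_p`; `f_n = 0` otherwise
(i.e. if `i₁ ≤ m ≤ i_{p−1}`). -/
def fnAux (m n : ℕ) (s : Finset (Fin (m+1+n+1))) : Ch (Fin (m+1+n+1)) :=
  let M := elM m n
  let lo := s.filter (fun i => i < M)
  let hi := s.filter (fun i => M < i)
  if lo.card = 0 ∨ hi.card = 0 then Finsupp.single s 1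
  else if lo.card = 1 ∧ hi.card = 1 ∧ M ∉ s then
    Finsupp.single (insert M lo) 1 + Finsupp.single (insert M hi) 1
  else if lo.card = 1 ∧ 2 ≤ hi.card ∧ M ∉ s then Finsupp.single (insert M hi) 1
  else if 2 ≤ lo.card ∧ hi.card = 1 ∧ M ∉ s then Finsupp.single (insert M lo) 1
  else 0

/-- the graded `ℤ`-linear endomorphism `f_n` of `C(m+1+n)`. -/
def fN (m n : ℕ) : Ch (Fin (m+1+n+1)) →ₗ[ℤ] Ch (Fin (m+1+n+1)) :=
  Finsupp.lift _ ℤ _ (fnAux m n)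

/-- `φ̄ : [m+1+n] → [1]`, extending `φ : [n] → [1]` by `0` on `{0,…,m}`. -/
def phibar (m n : ℕ) (φ : Fin (n+1) → Fin 2) : Fin (m+1+n+1) → Fin 2 := fun i =>
  if (i : ℕ) ≤ m then 0 else φ ⟨(i : ℕ) - (m + 1), by have := i.isLt; omega⟩

/-- concatenation on the right with the fixed tuple `t`, extended `ℤ`-bilinearly, with the
repeated-entry convention (a concatenation which is not strictly increasing is `0`). -/
def concatR {α : Type} [LinearOrder α] (t : Finset α) : Ch α →ₗ[ℤ] Ch α :=
  Finsupp.lift _ ℤ _ (fun u =>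
    if ∀ x ∈ u, ∀ y ∈ t, x < y then Finsupp.single (u ∪ t) (1 : ℤ) else 0)

/-- `f_φ` on a basis tuple `s`: writing `s` as the concatenation of its prefix
`s₀ = (i₀,…,i_{k_φ})` on which `φ̄` vanishes and its suffix `s₁ = (i_{k_φ+1},…,i_p)` on which
`φ̄` equals `1`, set `f_φ(s) = f_n(s₀)·s₁` (in particular `f_φ(s) = s` when `k_φ = −1` and
`f_φ(s) = f_n(s)` when `k_φ = p`). -/
def fPhiAux (m n : ℕ) (φ : Fin (n+1) → Fin 2) (s : Finset (Fin (m+1+n+1))) :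
    Ch (Fin (m+1+n+1)) :=
  concatR (s.filter (fun i => phibar m n φ i = 1))
    (fnAux m n (s.filter (fun i => phibar m n φ i = 0)))

/-- the graded `ℤ`-linear endomorphism `f_φ` of `C(m+1+n)`. -/
def fPhi (m n : ℕ) (φ : Fin (n+1) → Fin 2) :
    Ch (Fin (m+1+n+1)) →ₗ[ℤ] Ch (Fin (m+1+n+1)) :=
  Finsupp.lift _ ℤ _ (fPhiAux m n φ)
lemma lift_single {α β : Type} (f : Finset α → Ch β) (a : Finset α) (b : ℤ) :
    Finsupp.lift (Ch β) ℤ (Finset α) f (Finsupp.single a b) = b • f a := by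
  rw [Finsupp.lift_apply, Finsupp.sum_single_index]
  exact zero_smul ℤ (f a)

lemma fN_single (m n : ℕ) (s : Finset (Fin (m+1+n+1))) :
    fN m n (Finsupp.single s 1) = fnAux m n s := by
  rw [fN, lift_single, one_smul]

lemma concatR_single {α : Type} [LinearOrder α] [DecidableEq α] (t u : Finset α)
    (h : ∀ x ∈ u, ∀ y ∈ t, x < y) :
    concatR t (Finsupp.single u 1) = Finsupp.single (u ∪ t) 1 := by
  rw [concatR, lift_single, one_smul, if_pos h]
  congr!

lemma fnAux_eq (m n : ℕ) (M : Fin (m+1+n+1)) (hM : M = elM m n) (s : Finset (Fin (m+1+n+1))) :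
    fnAux m n s =
      if (s.filter (fun i => i < M)).card = 0 ∨ (s.filter (fun i => M < i)).card = 0
      then Finsupp.single s 1
      else if (s.filter (fun i => i < M)).card = 1 ∧ (s.filter (fun i => M < i)).card = 1 ∧ M ∉ s then
        Finsupp.single (insert M (s.filter (fun i => i < M))) 1 +
        Finsupp.single (insert M (s.filter (fun i => M < i))) 1
      else if (s.filter (fun i => i < M)).card = 1 ∧ 2 ≤ (s.filter (fun i => M < i)).card ∧ M ∉ s then
        Finsupp.single (insert M (s.filter (fun i => M < i))) 1
      else if 2 ≤ (s.filter (fun i => i < M)).card ∧ (s.filter (fun i => M < i)).card = 1 ∧ M ∉ s then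
        Finsupp.single (insert M (s.filter (fun i => i < M))) 1
      else 0 := by
  subst hM; rfl

lemma fnAux_hi_empty (m n : ℕ) (M : Fin (m+1+n+1)) (hM : M = elM m n)
    (s : Finset (Fin (m+1+n+1))) (h : ∀ i ∈ s, i ≤ M) :
    fnAux m n s = Finsupp.single s 1 := by
  rw [fnAux_eq m n M hM, if_pos]
  right
  rw [Finset.card_eq_zero, Finset.filter_eq_empty_iff]
  exact fun i hi => not_lt.2 (h i hi)

lemma fnAux_lo_empty (m n : ℕ) (M : Fin (m+1+n+1)) (hM : M = elM m n)
    (s : Finset (Fin (m+1+n+1))) (h : ∀ i ∈ s, M ≤ i) :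
    fnAux m n s = Finsupp.single s 1 := by
  rw [fnAux_eq m n M hM, if_pos]
  left
  rw [Finset.card_eq_zero, Finset.filter_eq_empty_iff]
  exact fun i hi => not_lt.2 (h i hi)

lemma fnAux_mem_zero (m n : ℕ) (M : Fin (m+1+n+1)) (hM : M = elM m n)
    (s : Finset (Fin (m+1+n+1))) (hMs : M ∈ s)
    (h1 : (s.filter (fun i => i < M)).Nonempty)
    (h2 : (s.filter (fun i => M < i)).Nonempty) :
    fnAux m n s = 0 := by
  rw [fnAux_eq m n M hM]
  have c1 := Finset.card_pos.2 h1
  have c2 := Finset.card_pos.2 h2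
  rw [if_neg (by omega), if_neg (by tauto), if_neg (by tauto), if_neg (by tauto)]

lemma fnAux_big_zero (m n : ℕ) (M : Fin (m+1+n+1)) (hM : M = elM m n)
    (s : Finset (Fin (m+1+n+1)))
    (h1 : 2 ≤ (s.filter (fun i => i < M)).card)
    (h2 : 2 ≤ (s.filter (fun i => M < i)).card) :
    fnAux m n s = 0 := by
  rw [fnAux_eq m n M hM]
  rw [if_neg (by omega), if_neg (by omega), if_neg (by omega), if_neg (by omega)]

lemma fN_fnAux (m n : ℕ) (s : Finset (Fin (m+1+n+1))) :
    fN m n (fnAux m n s) = fnAux m n s := by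
  rw [fnAux_eq m n (elM m n) rfl s]
  split_ifs with h1 h2 h3 h4
  · rw [fN_single, fnAux_eq m n (elM m n) rfl, if_pos h1]
  · rw [map_add, fN_single, fN_single,
      fnAux_hi_empty m n (elM m n) rfl _ (by
        intro i hi
        rcases Finset.mem_insert.1 hi with h | h
        · exact le_of_eq h
        · exact le_of_lt (Finset.mem_filter.1 h).2),
      fnAux_lo_empty m n (elM m n) rfl _ (by
        intro i hi
        rcases Finset.mem_insert.1 hi with h | h
        · exact le_of_eq h.symm
        · exact le_of_lt (Finset.mem_filter.1 h).2)]
  · rw [fN_single, fnAux_lo_empty m n (elM m n) rfl _ (by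
        intro i hi
        rcases Finset.mem_insert.1 hi with h | h
        · exact le_of_eq h.symm
        · exact le_of_lt (Finset.mem_filter.1 h).2)]
  · rw [fN_single, fnAux_hi_empty m n (elM m n) rfl _ (by
        intro i hi
        rcases Finset.mem_insert.1 hi with h | h
        · exact le_of_eq h
        · exact le_of_lt (Finset.mem_filter.1 h).2)]
  · exact map_zero _

lemma fin2_cases (x : Fin 2) : x = 0 ∨ x = 1 := by
  rcases x with ⟨k, hk⟩
  interval_cases k
  · exact Or.inl rfl
  · exact Or.inr rfl

lemma phibar_monotone (m n : ℕ) (φ : Fin (n+1) →o Fin 2) : Monotone (phibar m n ⇑φ) := by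
  intro i j hij
  have hij' : (i : ℕ) ≤ (j : ℕ) := hij
  unfold phibar
  split_ifs with h1 h2 h2
  · exact le_refl _
  · exact Fin.zero_le _
  · omega
  · exact φ.monotone (by simp [Fin.le_def]; omega)

lemma key (m n : ℕ) (φ : Fin (n+1) →o Fin 2) (s : Finset (Fin (m+1+n+1))) :
    fN m n (fPhiAux m n ⇑φ s) = fnAux m n s := by
  unfold fPhiAux
  set ψ := phibar m n ⇑φ with hψdef
  set M := elM m n with hMdef
  set s₀ := s.filter (fun i => ψ i = 0) with hs₀
  set s₁ := s.filter (fun i => ψ i = 1) with hs₁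
  have hMv : ((M : Fin (m+1+n+1)) : ℕ) = m := by rw [hMdef]; rfl
  have hψM : ψ M = 0 := by
    rw [hψdef]; unfold phibar
    rw [if_pos (le_of_eq hMv)]
  have hmem0 : ∀ i : Fin (m+1+n+1), (i:ℕ) ≤ m → ψ i = 0 := by
    intro i h; rw [hψdef]; unfold phibar; rw [if_pos h]
  have hS1gt : ∀ y ∈ s₁, M < y := by
    intro y hy
    rw [hs₁, Finset.mem_filter] at hy
    by_contra h
    push_neg at h
    have h2 := phibar_monotone m n φ h
    rw [← hψdef] at h2
    rw [hy.2, hψM] at h2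
    exact absurd h2 (by decide)
  have hlt01 : ∀ x ∈ s₀, ∀ y ∈ s₁, x < y := by
    intro x hx y hy
    rw [hs₀, Finset.mem_filter] at hx
    rw [hs₁, Finset.mem_filter] at hy
    by_contra h
    push_neg at h
    have h2 := phibar_monotone m n φ h
    rw [← hψdef] at h2
    rw [hy.2, hx.2] at h2
    exact absurd h2 (by decide)
  have hunion : s₀ ∪ s₁ = s := by
    rw [hs₀, hs₁]
    ext x
    simp only [Finset.mem_union, Finset.mem_filter]
    rcases fin2_cases (ψ x) with h | h <;> rw [h] <;> simp
  have hdisj : Disjoint s₀ s₁ := by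
    rw [hs₀, hs₁, Finset.disjoint_left]
    intro a ha hb
    rw [Finset.mem_filter] at ha hb
    exact absurd (ha.2.symm.trans hb.2) (by decide)
  have hlo : s₀.filter (fun i => i < M) = s.filter (fun i => i < M) := by
    ext x
    simp only [hs₀, Finset.filter_filter, Finset.mem_filter]
    constructor
    · rintro ⟨hx, -, h⟩
      exact ⟨hx, h⟩
    · rintro ⟨hx, h⟩
      refine ⟨hx, hmem0 x ?_, h⟩
      have := Fin.lt_def.mp h
      omega
  have hhi : s₀.filter (fun i => M < i) ∪ s₁ = s.filter (fun i => M < i) := by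
    ext x
    simp only [hs₀, hs₁, Finset.mem_union, Finset.filter_filter, Finset.mem_filter]
    constructor
    · rintro (⟨hx, -, h⟩ | h1)
      · exact ⟨hx, h⟩
      · exact ⟨h1.1, hS1gt x (by rw [hs₁, Finset.mem_filter]; exact h1)⟩
    · rintro ⟨hx, h⟩
      rcases fin2_cases (ψ x) with h0 | h1
      · exact Or.inl ⟨hx, h0, h⟩
      · exact Or.inr ⟨hx, h1⟩
  have hdisj2 : Disjoint (s₀.filter (fun i => M < i)) s₁ :=
    Finset.disjoint_of_subset_left (Finset.filter_subset _ _) hdisj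
  have hcard : (s.filter (fun i => M < i)).card
      = (s₀.filter (fun i => M < i)).card + s₁.card := by
    rw [← hhi, Finset.card_union_of_disjoint hdisj2]
  have hcl : (s.filter (fun i => i < M)).card = (s₀.filter (fun i => i < M)).card := by
    rw [hlo]
  have hMmem : M ∈ s ↔ M ∈ s₀ := by
    rw [hs₀, Finset.mem_filter]
    exact ⟨fun h => ⟨h, hψM⟩, fun h => h.1⟩
  have hIns1 : ∀ x ∈ insert M (s₀.filter (fun i => i < M)), ∀ y ∈ s₁, x < y := by
    intro x hx y hy
    rcases Finset.mem_insert.1 hx with rfl | hx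
    · exact hS1gt y hy
    · exact hlt01 x (Finset.mem_filter.1 hx).1 y hy
  have hIns2 : ∀ x ∈ insert M (s₀.filter (fun i => M < i)), ∀ y ∈ s₁, x < y := by
    intro x hx y hy
    rcases Finset.mem_insert.1 hx with rfl | hx
    · exact hS1gt y hy
    · exact hlt01 x (Finset.mem_filter.1 hx).1 y hy
  by_cases hA : (s₀.filter (fun i => i < M)).card = 0 ∨ (s₀.filter (fun i => M < i)).card = 0
  · have h0 : fnAux m n s₀ = Finsupp.single s₀ 1 := by
      rw [fnAux_eq m n M hMdef]; exact if_pos hA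
    rw [h0, concatR_single _ _ hlt01, hunion, fN_single]
  · push_neg at hA
    obtain ⟨hA1, hA2⟩ := hA
    by_cases hmem : M ∈ s₀
    · have h0 : fnAux m n s₀ = 0 :=
        fnAux_mem_zero m n M hMdef s₀ hmem (Finset.card_pos.mp (Nat.pos_of_ne_zero hA1))
          (Finset.card_pos.mp (Nat.pos_of_ne_zero hA2))
      rw [h0, map_zero, map_zero]
      refine (fnAux_mem_zero m n M hMdef s (hMmem.2 hmem) ?_ ?_).symm
      · exact Finset.card_pos.mp (by omega)
      · exact Finset.card_pos.mp (by omega)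
    · have hMns : M ∉ s := fun h => hmem (hMmem.1 h)
      by_cases hB : (s₀.filter (fun i => i < M)).card = 1
      · by_cases hC : (s₀.filter (fun i => M < i)).card = 1
        · -- case B : lo₀ = 1, hi₀ = 1
          have h0 : fnAux m n s₀
              = Finsupp.single (insert M (s₀.filter (fun i => i < M))) 1
              + Finsupp.single (insert M (s₀.filter (fun i => M < i))) 1 := by
            rw [fnAux_eq m n M hMdef, if_neg (by omega), if_pos ⟨hB, hC, hmem⟩]
          rw [h0, map_add, concatR_single _ _ hIns1, concatR_single _ _ hIns2,
            map_add, fN_single, fN_single]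
          rcases Finset.eq_empty_or_nonempty s₁ with he | hne
          · have hc0 : s₁.card = 0 := by rw [he]; rfl
            rw [he, Finset.union_empty, Finset.union_empty,
              fnAux_hi_empty m n M hMdef _ (by
                intro i hi
                rcases Finset.mem_insert.1 hi with h | h
                · exact le_of_eq h
                · exact le_of_lt (Finset.mem_filter.1 h).2),
              fnAux_lo_empty m n M hMdef _ (by
                intro i hi
                rcases Finset.mem_insert.1 hi with h | h
                · exact le_of_eq h.symm
                · exact le_of_lt (Finset.mem_filter.1 h).2),
              fnAux_eq m n M hMdef s,
              if_neg (by omega), if_pos ⟨by omega, by omega, hMns⟩, ← hlo, ← hhi, he,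
              Finset.union_empty]
          · have hc1 := Finset.card_pos.2 hne
            obtain ⟨x0, hx0⟩ := Finset.card_pos.mp
              (show 0 < (s₀.filter (fun i => i < M)).card by omega)
            obtain ⟨y0, hy0⟩ := hne
            rw [fnAux_mem_zero m n M hMdef _
                (Finset.mem_union_left _ (Finset.mem_insert_self _ _))
                ⟨x0, Finset.mem_filter.2 ⟨Finset.mem_union_left _
                  (Finset.mem_insert_of_mem hx0), (Finset.mem_filter.1 hx0).2⟩⟩
                ⟨y0, Finset.mem_filter.2 ⟨Finset.mem_union_right _ hy0, hS1gt y0 hy0⟩⟩,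
              fnAux_lo_empty m n M hMdef _ (by
                intro i hi
                rcases Finset.mem_union.1 hi with h | h
                · rcases Finset.mem_insert.1 h with h | h
                  · exact le_of_eq h.symm
                  · exact le_of_lt (Finset.mem_filter.1 h).2
                · exact le_of_lt (hS1gt i h)),
              zero_add,
              fnAux_eq m n M hMdef s, if_neg (by omega),
              if_neg (by rintro ⟨-, h2, -⟩; omega),
              if_pos ⟨by omega, by omega, hMns⟩, Finset.insert_union, hhi]
        · -- case C : lo₀ = 1, hi₀ ≥ 2
          have h0 : fnAux m n s₀
              = Finsupp.single (insert M (s₀.filter (fun i => M < i))) 1 := by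
            rw [fnAux_eq m n M hMdef, if_neg (by omega),
              if_neg (by rintro ⟨-, h, -⟩; exact hC h), if_pos ⟨hB, by omega, hmem⟩]
          rw [h0, concatR_single _ _ hIns2, fN_single,
            fnAux_lo_empty m n M hMdef _ (by
              intro i hi
              rcases Finset.mem_union.1 hi with h | h
              · rcases Finset.mem_insert.1 h with h | h
                · exact le_of_eq h.symm
                · exact le_of_lt (Finset.mem_filter.1 h).2
              · exact le_of_lt (hS1gt i h)),
            fnAux_eq m n M hMdef s, if_neg (by omega),
            if_neg (by rintro ⟨-, h2, -⟩; omega),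
            if_pos ⟨by omega, by omega, hMns⟩, Finset.insert_union, hhi]
      · by_cases hC : (s₀.filter (fun i => M < i)).card = 1
        · -- case D : lo₀ ≥ 2, hi₀ = 1
          have h0 : fnAux m n s₀
              = Finsupp.single (insert M (s₀.filter (fun i => i < M))) 1 := by
            rw [fnAux_eq m n M hMdef, if_neg (by omega),
              if_neg (by rintro ⟨h, -⟩; exact hB h),
              if_neg (by rintro ⟨h, -⟩; exact hB h), if_pos ⟨by omega, hC, hmem⟩]
          rw [h0, concatR_single _ _ hIns1, fN_single]
          rcases Finset.eq_empty_or_nonempty s₁ with he | hne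
          · have hc0 : s₁.card = 0 := by rw [he]; rfl
            rw [he, Finset.union_empty,
              fnAux_hi_empty m n M hMdef _ (by
                intro i hi
                rcases Finset.mem_insert.1 hi with h | h
                · exact le_of_eq h
                · exact le_of_lt (Finset.mem_filter.1 h).2),
              fnAux_eq m n M hMdef s, if_neg (by omega),
              if_neg (by rintro ⟨h, -⟩; omega),
              if_neg (by rintro ⟨h, -⟩; omega), if_pos ⟨by omega, by omega, hMns⟩, ← hlo]
          · have hc1 := Finset.card_pos.2 hne
            obtain ⟨x0, hx0⟩ := Finset.card_pos.mp
              (show 0 < (s₀.filter (fun i => i < M)).card by omega)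
            obtain ⟨y0, hy0⟩ := hne
            rw [fnAux_mem_zero m n M hMdef _
                (Finset.mem_union_left _ (Finset.mem_insert_self _ _))
                ⟨x0, Finset.mem_filter.2 ⟨Finset.mem_union_left _
                  (Finset.mem_insert_of_mem hx0), (Finset.mem_filter.1 hx0).2⟩⟩
                ⟨y0, Finset.mem_filter.2 ⟨Finset.mem_union_right _ hy0, hS1gt y0 hy0⟩⟩,
              fnAux_big_zero m n M hMdef s (by omega) (by omega)]
        · -- case E : lo₀ ≥ 2, hi₀ ≥ 2
          have h0 : fnAux m n s₀ = 0 :=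
            fnAux_big_zero m n M hMdef s₀ (by omega) (by omega)
          rw [h0, map_zero, map_zero]
          exact (fnAux_big_zero m n M hMdef s (by omega) (by omega)).symm

/-- STATEMENT 15: for every monotone `φ : [n] → [1]`, `f_n ∘ f_φ = f_n`; in particular
(taking `φ` constant of value `0`) `f_n ∘ f_n = f_n`. -/
theorem fN_comp_fPhi (m n : ℕ) (φ : Fin (n+1) →o Fin 2) :
    (fN m n).comp (fPhi m n ⇑φ) = fN m n ∧ (fN m n).comp (fN m n) = fN m n := by
  constructor
  · apply Finsupp.lhom_ext
    intro a b
    rw [LinearMap.comp_apply,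
      show fPhi m n ⇑φ (Finsupp.single a b) = b • fPhiAux m n ⇑φ a from lift_single _ a b,
      map_smul, key m n φ a,
      show fN m n (Finsupp.single a b) = b • fnAux m n a from lift_single _ a b]
  · apply Finsupp.lhom_ext
    intro a b
    rw [LinearMap.comp_apply,
      show fN m n (Finsupp.single a b) = b • fnAux m n a from lift_single _ a b,
      map_smul, fN_fnAux]

end
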